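/- Hölder-type bound for Wick-multiplied densities (one-dimensional version of Lemma 3.5): for every p > 1 and 1 ≤ q < p there exists C = C(p,q) > 0 such that for all f ∈ L^p(γ) with f ≥ 0 and all g with |g| < C, the function x ↦ ∫_ℝ f(x − λg)e^{λgx − λ²g²/2} dγ(λ) belongs to L^q(γ). -/

import Mathlib

open MeasureTheory ProbabilityTheory Real
open scoped ENNReal

private lemma gauss_eq : gaussianReal 0 1 = volume.withDensity (gaussianPDF 0 1) :=
  gaussianReal_of_var_ne_zero 0 one_ne_zero

private lemma pdf_eq (x : ℝ) : gaussianPDFReal 0 1 x = (Real.sqrt (2*π))⁻¹ * rexp (-(x^2)/2) := by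
  simp [gaussianPDFReal]

private lemma lint_quad_lt_top {c : ℝ} (hc : c < 1/2) :
    ∫⁻ x, ENNReal.ofReal (rexp (c * x^2)) ∂(gaussianReal 0 1) < ⊤ := by
  rw [gauss_eq, lintegral_withDensity_eq_lintegral_mul _ (measurable_gaussianPDF 0 1)
    (by fun_prop)]
  have heq : ∀ x : ℝ, (gaussianPDF 0 1 * fun x => ENNReal.ofReal (rexp (c * x^2))) x
      = ENNReal.ofReal ((Real.sqrt (2*π))⁻¹ * rexp (-(1/2 - c) * x^2)) := by
    intro x
    simp only [Pi.mul_apply, gaussianPDF, ← ENNReal.ofReal_mul (gaussianPDFReal_nonneg 0 1 x)]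
    rw [pdf_eq, mul_assoc, ← Real.exp_add]
    ring_nf
  simp_rw [heq]
  exact Integrable.lintegral_lt_top ((integrable_exp_neg_mul_sq (by linarith)).const_mul _)

private lemma hKq_lt_top : ∫⁻ x, ENNReal.ofReal (rexp (x^2/4)) ∂(gaussianReal 0 1) < ⊤ := by
  have : ∀ x : ℝ, x^2/4 = (1/4 : ℝ) * x^2 := by intro x; ring
  simp_rw [this]
  exact lint_quad_lt_top (by norm_num)

private lemma ofReal_exp_rpow (t r : ℝ) :
    ENNReal.ofReal (rexp t) ^ r = ENNReal.ofReal (rexp (r * t)) := by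
  rw [ENNReal.ofReal_rpow_of_pos (exp_pos t), mul_comm, exp_mul]

private lemma trans_key (a c y : ℝ) :
    gaussianPDF 0 1 (y+a) * ENNReal.ofReal (rexp (a*(y+a) - a^2/2 + c*(y+a)^2))
      = gaussianPDF 0 1 y * ENNReal.ofReal (rexp (c*(y+a)^2)) := by
  rw [gaussianPDF, gaussianPDF, ← ENNReal.ofReal_mul (gaussianPDFReal_nonneg _ _ _),
    ← ENNReal.ofReal_mul (gaussianPDFReal_nonneg _ _ _)]
  congr 1
  rw [pdf_eq, pdf_eq, mul_assoc, mul_assoc, ← exp_add, ← exp_add]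
  congr 2
  ring

private lemma trans_lemma (u : ℝ → ℝ≥0∞) (hu : Measurable u) (a c : ℝ) :
    ∫⁻ x, u (x - a) * ENNReal.ofReal (rexp (a*x - a^2/2 + c*x^2)) ∂(gaussianReal 0 1)
      = ∫⁻ y, u y * ENNReal.ofReal (rexp (c*(y+a)^2)) ∂(gaussianReal 0 1) := by
  rw [gauss_eq,
    lintegral_withDensity_eq_lintegral_mul _ (measurable_gaussianPDF 0 1) (by fun_prop),
    lintegral_withDensity_eq_lintegral_mul _ (measurable_gaussianPDF 0 1) (by fun_prop)]
  rw [← lintegral_add_right_eq_self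
    (fun x => (gaussianPDF 0 1 * fun x => u (x - a)
      * ENNReal.ofReal (rexp (a*x - a^2/2 + c*x^2))) x) a]
  apply lintegral_congr; intro y
  simp only [Pi.mul_apply, add_sub_cancel_right]
  calc gaussianPDF 0 1 (y+a) * (u y * ENNReal.ofReal (rexp (a*(y+a) - a^2/2 + c*(y+a)^2)))
      = u y * (gaussianPDF 0 1 (y+a) * ENNReal.ofReal (rexp (a*(y+a) - a^2/2 + c*(y+a)^2))) := by
        ring
    _ = u y * (gaussianPDF 0 1 y * ENNReal.ofReal (rexp (c*(y+a)^2))) := by rw [trans_key]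
    _ = gaussianPDF 0 1 y * (u y * ENNReal.ofReal (rexp (c*(y+a)^2))) := by ring

private lemma memLp_lintegral {f : ℝ → ℝ} {p : ℝ} (hp : 0 < p)
    (hf : MemLp f (ENNReal.ofReal p) (gaussianReal 0 1)) (hf0 : ∀ x, 0 ≤ f x) :
    ∫⁻ x, ENNReal.ofReal (f x) ^ p ∂(gaussianReal 0 1) < ⊤ := by
  have h2 := hf.2
  rw [eLpNorm_eq_lintegral_rpow_enorm_toReal (by simpa [ENNReal.ofReal_eq_zero] using hp)
    ENNReal.ofReal_ne_top, ENNReal.toReal_ofReal hp.le] at h2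
  have hn : ∀ x : ℝ, ‖f x‖ₑ = ENNReal.ofReal (f x) :=
    fun x => Real.enorm_eq_ofReal (hf0 x)
  simp_rw [hn] at h2
  exact (ENNReal.rpow_lt_top_iff_of_pos (one_div_pos.mpr hp)).mp h2

private lemma wick_core (p q r g : ℝ) (f : ℝ → ℝ) (hq1 : 1 < q) (hqp : q < p)
    (hr : r = p / (p - q))
    (hc1 : 2*r*(q-1)*g^2 ≤ 1/4) (hc2 : 2*(q-1)*g^4 ≤ 1/4)
    (hf0 : ∀ x, 0 ≤ f x) (hfm : Measurable f)
    (hfp : MemLp f (ENNReal.ofReal p) (gaussianReal 0 1)) :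
    MemLp (fun x => ∫ l, f (x - l * g) * Real.exp (l * g * x - l ^ 2 * g ^ 2 / 2)
            ∂(gaussianReal 0 1))
          (ENNReal.ofReal q) (gaussianReal 0 1) := by
  have hp1 : 1 < p := hq1.trans hqp
  have hq0 : (0:ℝ) < q := lt_trans one_pos hq1
  have hp0 : (0:ℝ) < p := lt_trans one_pos hp1
  have hpq0 : (0:ℝ) < p - q := by linarith
  have hr0 : 0 < r := hr ▸ div_pos hp0 hpq0
  have hr1 : 1 ≤ r := hr ▸ (le_div_iff₀ hpq0).mpr (by linarith)
  have hq10 : (0:ℝ) ≤ q - 1 := by linarith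
  set ν := gaussianReal 0 1 with hν
  set u : ℝ → ℝ≥0∞ := fun y => ENNReal.ofReal (f y) with hudef
  have hum : Measurable u := hfm.ennreal_ofReal
  -- strong measurability of the integral function
  have hFm : StronglyMeasurable (fun x => ∫ l, f (x - l * g)
      * rexp (l * g * x - l ^ 2 * g ^ 2 / 2) ∂ν) := by
    apply MeasureTheory.StronglyMeasurable.integral_prod_right
      (f := fun x l => f (x - l * g) * rexp (l * g * x - l ^ 2 * g ^ 2 / 2))
    apply Measurable.stronglyMeasurable
    fun_prop
  refine ⟨hFm.aestronglyMeasurable, ?_⟩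
  have hqne0 : ENNReal.ofReal q ≠ 0 := by
    simp only [ne_eq, ENNReal.ofReal_eq_zero, not_le]; linarith
  rw [eLpNorm_eq_lintegral_rpow_enorm_toReal hqne0 ENNReal.ofReal_ne_top,
    ENNReal.toReal_ofReal hq0.le]
  set G : ℝ → ℝ≥0∞ := fun x =>
    ∫⁻ l, u (x - l*g) * ENNReal.ofReal (rexp (l * g * x - l ^ 2 * g ^ 2 / 2)) ∂ν with hGdef
  have hnorm : ∀ x, ‖∫ l, f (x - l * g) * rexp (l * g * x - l ^ 2 * g ^ 2 / 2) ∂ν‖ₑ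
      ≤ G x := by
    intro x
    have hnn : 0 ≤ ∫ l, f (x - l * g) * rexp (l * g * x - l ^ 2 * g ^ 2 / 2) ∂ν :=
      integral_nonneg fun l => mul_nonneg (hf0 _) (exp_pos _).le
    rw [Real.enorm_eq_ofReal hnn]
    by_cases hi : Integrable (fun l => f (x - l*g) * rexp (l * g * x - l ^ 2 * g ^ 2 / 2)) ν
    · rw [ofReal_integral_eq_lintegral_ofReal hi
        (ae_of_all _ fun l => mul_nonneg (hf0 _) (exp_pos _).le)]
      refine lintegral_mono fun l => ?_
      rw [ENNReal.ofReal_mul (hf0 _)]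
    · rw [integral_undef hi]; simp
  suffices hGfin : ∫⁻ x, G x ^ q ∂ν < ⊤ by
    refine ENNReal.rpow_lt_top_of_nonneg (by positivity) ?_
    exact (lt_of_le_of_lt (lintegral_mono fun x =>
      ENNReal.rpow_le_rpow (hnorm x) hq0.le) hGfin).ne
  -- Step 1: Hölder in l
  set M : ℝ → ℝ≥0∞ := fun x =>
    ∫⁻ l, ENNReal.ofReal (rexp (l * g * x - l ^ 2 * g ^ 2 / 2)) ∂ν with hMdef
  set H : ℝ → ℝ≥0∞ := fun x =>
    ∫⁻ l, u (x - l*g) ^ q * ENNReal.ofReal (rexp (l * g * x - l ^ 2 * g ^ 2 / 2)) ∂ν with hHdef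
  have hstep1 : ∀ x, G x ^ q ≤ H x * M x ^ (q - 1) := by
    intro x
    have hone : 1/q + (1 - 1/q) = 1 := by ring
    have h1q : (0:ℝ) ≤ 1 - 1/q := by
      rw [sub_nonneg]; exact div_le_one_of_le₀ hq1.le hq0.le
    have hH := ENNReal.lintegral_mul_norm_pow_le (μ := ν)
      (f := fun l => u (x - l*g) ^ q * ENNReal.ofReal (rexp (l * g * x - l ^ 2 * g ^ 2 / 2)))
      (g := fun l => ENNReal.ofReal (rexp (l * g * x - l ^ 2 * g ^ 2 / 2)))
      (by fun_prop) (by fun_prop) (by positivity) h1q hone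
    have heq : ∀ l : ℝ, (u (x - l*g) ^ q
          * ENNReal.ofReal (rexp (l * g * x - l ^ 2 * g ^ 2 / 2))) ^ (1/q)
        * ENNReal.ofReal (rexp (l * g * x - l ^ 2 * g ^ 2 / 2)) ^ (1 - 1/q)
        = u (x - l*g) * ENNReal.ofReal (rexp (l * g * x - l ^ 2 * g ^ 2 / 2)) := by
      intro l
      rw [ENNReal.mul_rpow_of_nonneg _ _ (by positivity : (0:ℝ) ≤ 1/q),
        ← ENNReal.rpow_mul, mul_one_div_cancel hq0.ne', ENNReal.rpow_one, mul_assoc,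
        ← ENNReal.rpow_add_of_nonneg _ _ (by positivity : (0:ℝ) ≤ 1/q) h1q, hone,
        ENNReal.rpow_one]
    have hG' : G x ≤ H x ^ (1/q) * M x ^ (1 - 1/q) := by
      rw [hGdef]
      simp only
      calc ∫⁻ l, u (x - l*g) * ENNReal.ofReal (rexp (l * g * x - l ^ 2 * g ^ 2 / 2)) ∂ν
          = ∫⁻ l, (u (x - l*g) ^ q
              * ENNReal.ofReal (rexp (l * g * x - l ^ 2 * g ^ 2 / 2))) ^ (1/q)
            * ENNReal.ofReal (rexp (l * g * x - l ^ 2 * g ^ 2 / 2)) ^ (1 - 1/q) ∂ν :=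
            (lintegral_congr heq).symm
        _ ≤ H x ^ (1/q) * M x ^ (1 - 1/q) := hH
    have hexp : (1 - 1/q) * q = q - 1 := by field_simp
    calc G x ^ q ≤ (H x ^ (1/q) * M x ^ (1 - 1/q)) ^ q :=
          ENNReal.rpow_le_rpow hG' hq0.le
      _ = H x * M x ^ (q - 1) := by
          rw [ENNReal.mul_rpow_of_nonneg _ _ hq0.le, ← ENNReal.rpow_mul, ← ENNReal.rpow_mul,
            one_div_mul_cancel hq0.ne', ENNReal.rpow_one, hexp]
  -- Step 2: bound M
  set Kq : ℝ≥0∞ := ∫⁻ y, ENNReal.ofReal (rexp (y^2/4)) ∂ν with hKqdef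
  have hKq : Kq < ⊤ := hKq_lt_top
  have hMle : ∀ x, M x ≤ ENNReal.ofReal (rexp (g^2 * x^2)) * Kq := by
    intro x
    calc M x ≤ ∫⁻ l, ENNReal.ofReal (rexp (g^2 * x^2))
          * ENNReal.ofReal (rexp (l^2/4)) ∂ν := by
          refine lintegral_mono fun l => ?_
          rw [← ENNReal.ofReal_mul (exp_pos _).le, ← exp_add]
          refine ENNReal.ofReal_le_ofReal (exp_le_exp.mpr ?_)
          nlinarith [sq_nonneg (l/2 - g*x), sq_nonneg (l*g)]
      _ = ENNReal.ofReal (rexp (g^2 * x^2)) * Kq := lintegral_const_mul' _ _ ENNReal.ofReal_ne_top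
  -- Step 3: combine
  have hKqpow : Kq ^ (q-1) ≠ ⊤ := (ENNReal.rpow_lt_top_of_nonneg hq10 hKq.ne).ne
  have hstep2 : ∫⁻ x, G x ^ q ∂ν
      ≤ Kq ^ (q-1) * ∫⁻ x, ENNReal.ofReal (rexp ((q-1) * (g^2 * x^2))) * H x ∂ν := by
    rw [← lintegral_const_mul' _ _ hKqpow]
    refine lintegral_mono fun x => ?_
    calc G x ^ q ≤ H x * M x ^ (q-1) := hstep1 x
      _ ≤ H x * (ENNReal.ofReal (rexp (g^2 * x^2)) * Kq) ^ (q-1) := by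
          exact mul_le_mul_right (ENNReal.rpow_le_rpow (hMle x) hq10) _
      _ = Kq ^ (q-1) * (ENNReal.ofReal (rexp ((q-1) * (g^2*x^2))) * H x) := by
          rw [ENNReal.mul_rpow_of_nonneg _ _ hq10, ofReal_exp_rpow]
          ring
  -- Step 4: push constant into H and swap integrals
  have hinner : ∀ x, ENNReal.ofReal (rexp ((q-1) * (g^2 * x^2))) * H x
      = ∫⁻ l, u (x - l*g) ^ q
          * ENNReal.ofReal (rexp (l*g*x - l^2*g^2/2 + (q-1)*(g^2*x^2))) ∂ν := by
    intro x
    rw [hHdef]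
    simp only
    rw [← lintegral_const_mul' _ _ ENNReal.ofReal_ne_top]
    refine lintegral_congr fun l => ?_
    rw [← mul_assoc, mul_comm (ENNReal.ofReal (rexp ((q-1) * (g^2 * x^2)))) (u (x - l*g) ^ q),
      mul_assoc, ← ENNReal.ofReal_mul (exp_pos _).le, ← exp_add]
    congr 3
    ring
  have hswap : ∫⁻ x, ∫⁻ l, u (x - l*g) ^ q
        * ENNReal.ofReal (rexp (l*g*x - l^2*g^2/2 + (q-1)*(g^2*x^2))) ∂ν ∂ν
      = ∫⁻ l, ∫⁻ x, u (x - l*g) ^ q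
        * ENNReal.ofReal (rexp (l*g*x - l^2*g^2/2 + (q-1)*(g^2*x^2))) ∂ν ∂ν := by
    apply lintegral_lintegral_swap
    fun_prop
  -- Step 5: translation identity per l
  have hper : ∀ l : ℝ, ∫⁻ x, u (x - l*g) ^ q
        * ENNReal.ofReal (rexp (l*g*x - l^2*g^2/2 + (q-1)*(g^2*x^2))) ∂ν
      = ∫⁻ y, u y ^ q * ENNReal.ofReal (rexp ((q-1)*g^2 * (y + l*g)^2)) ∂ν := by
    intro l
    have ht := trans_lemma (fun y => u y ^ q) (by fun_prop) (l*g) ((q-1)*g^2)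
    rw [hν, ← ht]
    refine lintegral_congr fun x => ?_
    congr 3
    ring
  -- Step 6: Hölder in y
  set KF : ℝ≥0∞ := (∫⁻ y, u y ^ p ∂ν) ^ (q/p) with hKFdef
  have hKF : KF < ⊤ :=
    ENNReal.rpow_lt_top_of_nonneg (by positivity) (memLp_lintegral hp0 hfp hf0).ne
  have hconj : q/p + 1/r = 1 := by
    rw [hr, one_div_div]
    field_simp
    ring
  have hbound : ∀ l : ℝ, ∫⁻ y, u y ^ q * ENNReal.ofReal (rexp ((q-1)*g^2 * (y + l*g)^2)) ∂ν
      ≤ ENNReal.ofReal (rexp (2*(q-1)*g^4*l^2)) * (KF * Kq ^ (1/r)) := by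
    intro l
    have hHold := ENNReal.lintegral_mul_norm_pow_le (μ := ν)
      (f := fun y => u y ^ p) (g := fun y => ENNReal.ofReal (rexp (2*r*(q-1)*g^2*y^2)))
      (by fun_prop) (by fun_prop) (by positivity : (0:ℝ) ≤ q/p)
      (by positivity : (0:ℝ) ≤ 1/r) hconj
    have hpt : ∀ y : ℝ, (u y ^ p) ^ (q/p)
        * ENNReal.ofReal (rexp (2*r*(q-1)*g^2*y^2)) ^ (1/r)
        = u y ^ q * ENNReal.ofReal (rexp (2*(q-1)*g^2*y^2)) := by
      intro y
      rw [← ENNReal.rpow_mul, ofReal_exp_rpow]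
      congr 2
      · field_simp
      · field_simp
    calc ∫⁻ y, u y ^ q * ENNReal.ofReal (rexp ((q-1)*g^2 * (y + l*g)^2)) ∂ν
        ≤ ∫⁻ y, ENNReal.ofReal (rexp (2*(q-1)*g^4*l^2))
            * (u y ^ q * ENNReal.ofReal (rexp (2*(q-1)*g^2*y^2))) ∂ν := by
          refine lintegral_mono fun y => ?_
          have hexple : ENNReal.ofReal (rexp ((q-1)*g^2 * (y + l*g)^2))
              ≤ ENNReal.ofReal (rexp (2*(q-1)*g^4*l^2))
                * ENNReal.ofReal (rexp (2*(q-1)*g^2*y^2)) := by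
            rw [← ENNReal.ofReal_mul (exp_pos _).le, ← exp_add]
            refine ENNReal.ofReal_le_ofReal (exp_le_exp.mpr ?_)
            nlinarith [mul_nonneg (mul_nonneg hq10 (sq_nonneg g)) (sq_nonneg (y - l*g))]
          refine le_trans (mul_le_mul_right hexple _) (le_of_eq ?_)
          ring
      _ = ENNReal.ofReal (rexp (2*(q-1)*g^4*l^2))
            * ∫⁻ y, u y ^ q * ENNReal.ofReal (rexp (2*(q-1)*g^2*y^2)) ∂ν :=
          lintegral_const_mul' _ _ ENNReal.ofReal_ne_top
      _ ≤ ENNReal.ofReal (rexp (2*(q-1)*g^4*l^2)) * (KF * Kq ^ (1/r)) := by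
          refine mul_le_mul_right ?_ _
          calc ∫⁻ y, u y ^ q * ENNReal.ofReal (rexp (2*(q-1)*g^2*y^2)) ∂ν
              = ∫⁻ y, (u y ^ p) ^ (q/p)
                  * ENNReal.ofReal (rexp (2*r*(q-1)*g^2*y^2)) ^ (1/r) ∂ν :=
                (lintegral_congr hpt).symm
            _ ≤ (∫⁻ y, u y ^ p ∂ν) ^ (q/p)
                  * (∫⁻ y, ENNReal.ofReal (rexp (2*r*(q-1)*g^2*y^2)) ∂ν) ^ (1/r) := hHold
            _ ≤ KF * Kq ^ (1/r) := by
                refine mul_le_mul_right (ENNReal.rpow_le_rpow ?_ (by positivity)) _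
                refine lintegral_mono fun y => ENNReal.ofReal_le_ofReal (exp_le_exp.mpr ?_)
                nlinarith [sq_nonneg y, mul_nonneg
                  (by linarith : (0:ℝ) ≤ 1/4 - 2*r*(q-1)*g^2) (sq_nonneg y)]
  -- Step 7: integrate in l and assemble
  have hKqr : Kq ^ (1/r) ≠ ⊤ := (ENNReal.rpow_lt_top_of_nonneg (by positivity) hKq.ne).ne
  have hfinal : ∫⁻ l, ∫⁻ x, u (x - l*g) ^ q
        * ENNReal.ofReal (rexp (l*g*x - l^2*g^2/2 + (q-1)*(g^2*x^2))) ∂ν ∂ν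
      ≤ KF * Kq ^ (1/r) * Kq := by
    calc ∫⁻ l, ∫⁻ x, u (x - l*g) ^ q
          * ENNReal.ofReal (rexp (l*g*x - l^2*g^2/2 + (q-1)*(g^2*x^2))) ∂ν ∂ν
        = ∫⁻ l, ∫⁻ y, u y ^ q * ENNReal.ofReal (rexp ((q-1)*g^2 * (y + l*g)^2)) ∂ν ∂ν :=
          lintegral_congr hper
      _ ≤ ∫⁻ l, ENNReal.ofReal (rexp (2*(q-1)*g^4*l^2)) * (KF * Kq ^ (1/r)) ∂ν :=
          lintegral_mono hbound
      _ = (KF * Kq ^ (1/r)) * ∫⁻ l, ENNReal.ofReal (rexp (2*(q-1)*g^4*l^2)) ∂ν := by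
          rw [← lintegral_const_mul' _ _ (ENNReal.mul_ne_top hKF.ne hKqr)]
          refine lintegral_congr fun l => ?_
          ring
      _ ≤ (KF * Kq ^ (1/r)) * Kq := by
          refine mul_le_mul_right ?_ _
          refine lintegral_mono fun l => ENNReal.ofReal_le_ofReal (exp_le_exp.mpr ?_)
          nlinarith [sq_nonneg l, mul_nonneg
            (by linarith : (0:ℝ) ≤ 1/4 - 2*(q-1)*g^4) (sq_nonneg l)]
      _ = KF * Kq ^ (1/r) * Kq := by ring
  calc ∫⁻ x, G x ^ q ∂ν
      ≤ Kq ^ (q-1) * ∫⁻ x, ENNReal.ofReal (rexp ((q-1) * (g^2 * x^2))) * H x ∂ν := hstep2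
    _ = Kq ^ (q-1) * ∫⁻ x, ∫⁻ l, u (x - l*g) ^ q
          * ENNReal.ofReal (rexp (l*g*x - l^2*g^2/2 + (q-1)*(g^2*x^2))) ∂ν ∂ν := by
        rw [lintegral_congr hinner]
    _ ≤ Kq ^ (q-1) * (KF * Kq ^ (1/r) * Kq) := by
        rw [hswap]
        exact mul_le_mul_right hfinal _
    _ < ⊤ := by
        refine ENNReal.mul_lt_top ?_ ?_
        · exact ENNReal.rpow_lt_top_of_nonneg hq10 hKq.ne
        · refine ENNReal.mul_lt_top (ENNReal.mul_lt_top hKF ?_) hKq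
          exact ENNReal.rpow_lt_top_of_nonneg (by positivity) hKq.ne


private lemma wick_aux (p q : ℝ) (hq1 : 1 < q) (hqp : q < p) :
    ∃ C > (0 : ℝ), ∀ f : ℝ → ℝ, (∀ x, 0 ≤ f x) →
      MemLp f (ENNReal.ofReal p) (gaussianReal 0 1) →
      ∀ g : ℝ, |g| < C →
        MemLp (fun x => ∫ l, f (x - l * g) * Real.exp (l * g * x - l ^ 2 * g ^ 2 / 2)
            ∂(gaussianReal 0 1))
          (ENNReal.ofReal q) (gaussianReal 0 1) := by
  have hp1 : 1 < p := hq1.trans hqp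
  have hq0 : (0:ℝ) < q := lt_trans one_pos hq1
  have hp0 : (0:ℝ) < p := lt_trans one_pos hp1
  have hpq0 : (0:ℝ) < p - q := by linarith
  set r : ℝ := p / (p - q) with hrdef
  have hr0 : 0 < r := div_pos hp0 hpq0
  have hr1 : 1 ≤ r := (le_div_iff₀ hpq0).mpr (by linarith)
  set K : ℝ := 2 * r * (q - 1) + 1 with hKdef
  have hK1 : 1 ≤ K := by nlinarith
  have hK0 : 0 < K := by linarith
  refine ⟨min 1 (1 / (2 * Real.sqrt K)), lt_min one_pos (by positivity), ?_⟩
  intro f hf0 hfp g hg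
  have hg1 : |g| < 1 := lt_of_lt_of_le hg (min_le_left _ _)
  have hsK : 0 < Real.sqrt K := Real.sqrt_pos.mpr hK0
  have h4 : |g| * (2 * Real.sqrt K) < 1 := by
    have h2 : |g| < 1 / (2 * Real.sqrt K) := lt_of_lt_of_le hg (min_le_right _ _)
    exact (lt_div_iff₀ (by positivity)).mp h2
  have hgsqK : g^2 * K < 1/4 := by
    nlinarith [sq_abs g, Real.sq_sqrt hK0.le, abs_nonneg g, Real.sqrt_nonneg K,
      mul_nonneg (abs_nonneg g) (by positivity : (0:ℝ) ≤ 2 * Real.sqrt K)]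
  have hgsq1 : g^2 ≤ 1 := by nlinarith [sq_abs g, abs_nonneg g]
  have hc1 : 2*r*(q-1)*g^2 ≤ 1/4 := by nlinarith [sq_nonneg g]
  have hc2 : 2*(q-1)*g^4 ≤ 1/4 := by
    nlinarith [sq_nonneg g, sq_nonneg (g^2), mul_nonneg (sub_nonneg.mpr hq1.le) (sq_nonneg g),
      mul_nonneg (mul_nonneg (sub_nonneg.mpr (by linarith : (1:ℝ) ≤ r))
        (sub_nonneg.mpr hq1.le)) (sq_nonneg g)]
  by_cases hg0 : g = 0
  · subst hg0
    have hFf : (fun x => ∫ l, f (x - l * 0) * rexp (l * 0 * x - l ^ 2 * 0 ^ 2 / 2)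
        ∂(gaussianReal 0 1)) = f := by
      funext x
      simp [integral_const]
    rw [hFf]
    exact hfp.mono_exponent (ENNReal.ofReal_le_ofReal hqp.le)
  -- measurable nonnegative representative
  obtain ⟨f₁, hf₁sm, hff₁⟩ := hfp.1
  set f₀ : ℝ → ℝ := fun x => max (f₁ x) 0 with hf₀def
  have hf₀m : Measurable f₀ := hf₁sm.measurable.max measurable_const
  have hf₀0 : ∀ x, 0 ≤ f₀ x := fun x => le_max_right _ _
  have hff₀ : f =ᵐ[gaussianReal 0 1] f₀ := by
    filter_upwards [hff₁] with x hx
    rw [hf₀def]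
    simp only
    rw [← hx, max_eq_left (hf0 x)]
  have hf₀p : MemLp f₀ (ENNReal.ofReal p) (gaussianReal 0 1) := hfp.ae_eq hff₀
  have hnull : (gaussianReal 0 1) {x | ¬ f x = f₀ x} = 0 := ae_iff.mp hff₀
  obtain ⟨N, hNsub, hNm, hN0⟩ := exists_measurable_superset_of_null hnull
  have hNvol : volume N = 0 := gaussianReal_absolutelyContinuous' 0 one_ne_zero hN0
  have hvar : (⟨g^2, sq_nonneg g⟩ : NNReal) ≠ 0 := by
    intro h
    exact pow_ne_zero 2 hg0 (by exact_mod_cast congrArg Subtype.val h)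
  have hmap : ∀ x : ℝ, (gaussianReal 0 1).map (fun l => x - l * g)
      = gaussianReal x ⟨g^2, sq_nonneg g⟩ := by
    intro x
    have hfun : (fun l : ℝ => x - l * g) = (· + x) ∘ (fun l => (-g) * l) := by
      funext l
      simp only [Function.comp_apply]
      ring
    rw [hfun, ← Measure.map_map (measurable_add_const x) (measurable_const_mul (-g)),
      gaussianReal_map_const_mul (-g), gaussianReal_map_add_const]
    congr 1
    · ring
    · rw [mul_one]
      exact Subtype.ext (neg_sq g)
  have hNg : ∀ x : ℝ, (gaussianReal 0 1) ((fun l => x - l * g) ⁻¹' N) = 0 := by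
    intro x
    have hmb : Measurable (fun l : ℝ => x - l * g) := by fun_prop
    rw [← Measure.map_apply hmb hNm, hmap x]
    exact gaussianReal_absolutelyContinuous x hvar hNvol
  have hFeq : (fun x => ∫ l, f (x - l * g) * rexp (l * g * x - l ^ 2 * g ^ 2 / 2)
      ∂(gaussianReal 0 1))
      = fun x => ∫ l, f₀ (x - l * g) * rexp (l * g * x - l ^ 2 * g ^ 2 / 2)
      ∂(gaussianReal 0 1) := by
    funext x
    refine integral_congr_ae ?_
    have hae : ∀ᵐ l ∂(gaussianReal 0 1), f (x - l * g) = f₀ (x - l * g) := by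
      rw [ae_iff]
      refine measure_mono_null (fun l hl => ?_) (hNg x)
      exact hNsub (show x - l * g ∈ {y | ¬ f y = f₀ y} from hl)
    filter_upwards [hae] with l h
    rw [h]
  rw [hFeq]
  exact wick_core p q r g f₀ hq1 hqp hrdef hc1 hc2 hf₀0 hf₀m hf₀p


/-- Hölder-type bound for Wick-multiplied densities: for `p > 1` and
`1 ≤ q < p` there exists `C > 0` such that for every nonnegative `f ∈ L^p(γ)` and
every `g` with `|g| < C`, the function
`x ↦ ∫ f(x - λg) exp (λgx - λ²g²/2) dγ(λ)` belongs to `L^q(γ)`. -/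
theorem wick_multiplied_density_memLq
    (p q : ℝ) (hp : 1 < p) (hq1 : 1 ≤ q) (hqp : q < p) :
    ∃ C > (0 : ℝ), ∀ f : ℝ → ℝ, (∀ x, 0 ≤ f x) →
      MemLp f (ENNReal.ofReal p) (gaussianReal 0 1) →
      ∀ g : ℝ, |g| < C →
        MemLp (fun x => ∫ l, f (x - l * g) * Real.exp (l * g * x - l ^ 2 * g ^ 2 / 2)
            ∂(gaussianReal 0 1))
          (ENNReal.ofReal q) (gaussianReal 0 1) := by
  obtain ⟨C, hC0, hC⟩ := wick_aux p ((q + p) / 2) (by linarith) (by linarith)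
  refine ⟨C, hC0, ?_⟩
  intro f hf0 hfp g hg
  exact (hC f hf0 hfp g hg).mono_exponent (ENNReal.ofReal_le_ofReal (by linarith))
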